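/- arXiv:2407.00588 — 2 statements merged into one kernel-verified Lean document; each statement's English description precedes it below -/
import Mathlib

section
/- Let 0 < α < 1 and λ > 0 be real constants. Then for every t > 0, the function s ↦ E_{α,1}(-λ s^α) is differentiable at t and its derivative equals -λ t^{α-1} E_{α,α}(-λ t^α). -/
open Real Set


lemma gamma_lb (q x : ℝ) (hq : 1 ≤ q) (hx : 1 ≤ x) :
    q ^ x / (q * ∑' n : ℕ, q ^ n / n.factorial) ≤ Real.Gamma (x + 1) := by
  have hq0 : (0:ℝ) < q := lt_of_lt_of_le one_pos hq
  set C := ∑' n : ℕ, q ^ n / n.factorial with hC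
  have hsum : Summable (fun n : ℕ => q ^ n / n.factorial) := Real.summable_pow_div_factorial q
  have hC1 : (1:ℝ) ≤ C := by
    have := Summable.le_tsum hsum 0 (fun i _ => by positivity)
    simpa using this
  have hC0 : (0:ℝ) < C := lt_of_lt_of_le one_pos hC1
  set n := ⌊x⌋₊ with hn
  have hn1 : 1 ≤ n := Nat.le_floor (by exact_mod_cast hx)
  have hnx : (n:ℝ) ≤ x := Nat.floor_le (by linarith)
  have hxn : x - 1 ≤ (n:ℝ) := (Nat.sub_one_lt_floor x).le
  -- Γ(x+1) ≥ Γ(n+1) = n!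
  have h1 : ((n.factorial : ℝ)) ≤ Real.Gamma (x + 1) := by
    rw [← Real.Gamma_nat_eq_factorial]
    have h1n : (1:ℝ) ≤ n := by exact_mod_cast hn1
    rcases eq_or_lt_of_le hnx with h | h
    · rw [h]
    · exact (Real.Gamma_strictMonoOn_Ici
        (by simp only [mem_Ici]; linarith)
        (by simp only [mem_Ici]; linarith)
        (by linarith)).le
  -- q^n / C ≤ n!
  have h2 : q ^ (n:ℕ) / C ≤ (n.factorial : ℝ) := by
    have := Summable.le_tsum hsum n (fun i _ => by positivity)
    rw [div_le_iff₀ hC0]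
    have hf : (0:ℝ) < n.factorial := by exact_mod_cast n.factorial_pos
    calc q ^ (n:ℕ) = (q ^ (n:ℕ) / n.factorial) * n.factorial := by field_simp
    _ ≤ C * n.factorial := by gcongr
    _ = (n.factorial : ℝ) * C := by ring
  -- q^x / (q C) ≤ q^n / C
  have h3 : q ^ x / (q * C) ≤ q ^ (n:ℕ) / C := by
    rw [div_le_div_iff₀ (by positivity) hC0]
    have : q ^ x ≤ q ^ ((n:ℝ) + 1) := Real.rpow_le_rpow_of_exponent_le hq (by linarith)
    calc q ^ x * C ≤ q ^ ((n:ℝ)+1) * C := by gcongr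
    _ = q ^ (n:ℕ) * (q * C) := by
        rw [Real.rpow_add hq0, Real.rpow_natCast, Real.rpow_one]; ring
  linarith

lemma ml_summable (α R : ℝ) (hα : 0 < α) (hR : 0 ≤ R) :
    Summable (fun m : ℕ => ((m:ℝ) + 1) * R ^ m / Real.Gamma (α * m + 1)) := by
  set q : ℝ := (2 * (R + 1)) ^ (α⁻¹ : ℝ) with hqdef
  have hq1 : 1 ≤ q := Real.one_le_rpow (by linarith) (by positivity)
  have hqα : q ^ α = 2 * (R + 1) := Real.rpow_inv_rpow (by linarith) hα.ne'
  have hq0 : 0 < q := lt_of_lt_of_le one_pos hq1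
  set C := ∑' n : ℕ, q ^ n / n.factorial with hC
  have hC1 : (1:ℝ) ≤ C := by
    have := Summable.le_tsum (Real.summable_pow_div_factorial q) 0 (fun i _ => by positivity)
    simpa using this
  set r : ℝ := R / (2 * (R + 1)) with hr
  have hr0 : 0 ≤ r := by positivity
  have hr1 : r < 1 := by rw [hr, div_lt_one (by linarith)]; linarith
  set M : ℕ := ⌈α⁻¹⌉₊ with hM
  have hM1 : 1 ≤ α * M := by
    rw [← mul_inv_cancel₀ hα.ne']
    have : α⁻¹ ≤ (M:ℝ) := Nat.le_ceil _
    gcongr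
  rw [← summable_nat_add_iff M]
  have hgeom : Summable (fun m : ℕ => ((m:ℝ)+1) * r ^ m) := by
    have h1 := summable_pow_mul_geometric_of_norm_lt_one (R := ℝ) 1
      (r := r) (by rwa [Real.norm_eq_abs, abs_of_nonneg hr0])
    have h2 := summable_geometric_of_lt_one hr0 hr1
    have := h1.add h2
    refine this.congr fun m => by push_cast; ring
  have hmaj : Summable (fun m : ℕ => (q * C) * (((m+M:ℕ):ℝ)+1) * r ^ (m+M)) := by
    have := ((summable_nat_add_iff M).2 hgeom).mul_left (q * C)
    refine this.congr fun m => by push_cast; ring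
  refine Summable.of_nonneg_of_le (fun m => by positivity) (fun m => ?_) hmaj
  set k : ℕ := m + M with hk
  have hMk : (M:ℝ) ≤ k := by exact_mod_cast Nat.le_add_left M m
  have hk1 : 1 ≤ α * k := le_trans hM1 (by gcongr)
  have hΓ : q ^ (α * (k:ℝ)) / (q * C) ≤ Real.Gamma (α * k + 1) := gamma_lb q _ hq1 hk1
  have hΓ0 : 0 < Real.Gamma (α * k + 1) := Real.Gamma_pos_of_pos (by nlinarith)
  have hqk : q ^ (α * (k:ℝ)) = (2 * (R + 1)) ^ k := by
    rw [Real.rpow_mul (le_of_lt hq0), hqα, Real.rpow_natCast]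
  calc ((k:ℝ) + 1) * R ^ k / Real.Gamma (α * k + 1)
      ≤ ((k:ℝ) + 1) * R ^ k / (q ^ (α * (k:ℝ)) / (q * C)) := by
        have hC0 : (0:ℝ) < C := lt_of_lt_of_le one_pos hC1
        exact div_le_div_of_nonneg_left (by positivity) (by positivity) hΓ
    _ = (q * C) * (((k:ℕ):ℝ)+1) * r ^ k := by
        rw [hqk, hr, div_pow]
        have h2R : (0:ℝ) < (2*(R+1))^k := by positivity
        field_simp

/-- The real Mittag-Leffler function, with the convention that `1/Γ = 0` at the
poles of `Γ`. -/
noncomputable def mittagLeffler (α β x : ℝ) : ℝ :=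
  ∑' m : ℕ, x ^ m / Real.Gamma (α * m + β)

/-- For `0 < α < 1` and `λ > 0`, for every `t > 0` the map `s ↦ E_{α,1}(-λ s^α)` is
differentiable at `t` with derivative `-λ t^{α-1} E_{α,α}(-λ t^α)`. -/
theorem stmt_2 (α lam : ℝ) (hα0 : 0 < α) (hα1 : α < 1) (hlam : 0 < lam) :
    ∀ t : ℝ, 0 < t →
      HasDerivAt (fun s : ℝ => mittagLeffler α 1 (-(lam * s ^ α)))
        (-(lam * t ^ (α - 1) * mittagLeffler α α (-(lam * t ^ α)))) t := by
  intro t ht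
  set T : Set ℝ := Set.Ioo (t/2) (2*t) with hT
  have htT : t ∈ T := ⟨by linarith, by linarith⟩
  have ht2 : 0 < t/2 := by linarith
  set R : ℝ := lam * (2*t) ^ α with hR
  have hR0 : 0 ≤ R := by positivity
  set f : ℕ → ℝ → ℝ := fun m s => (-lam) ^ m * s ^ (α * m) / Real.Gamma (α * m + 1) with hf
  set f' : ℕ → ℝ → ℝ :=
    fun m s => (-lam) ^ m * ((α * m) * s ^ (α * m - 1)) / Real.Gamma (α * m + 1) with hf'
  set u : ℕ → ℝ := fun m => (2 * α / t) * (((m:ℝ) + 1) * R ^ m / Real.Gamma (α * m + 1))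
    with hu
  have hu_sum : Summable u := (ml_summable α R hα0 hR0).mul_left _
  -- derivatives
  have hderiv : ∀ m : ℕ, ∀ s ∈ T, HasDerivAt (f m) (f' m s) s := by
    intro m s hs
    have hs0 : (0:ℝ) < s := lt_trans ht2 hs.1
    have h := (Real.hasDerivAt_rpow_const (p := α * m) (Or.inl hs0.ne'))
    exact (h.const_mul ((-lam) ^ m)).div_const _
  -- bound
  have hbound : ∀ m : ℕ, ∀ s ∈ T, ‖f' m s‖ ≤ u m := by
    intro m s hs
    have hs0 : (0:ℝ) < s := lt_trans ht2 hs.1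
    have hΓ0 : 0 < Real.Gamma (α * m + 1) := Real.Gamma_pos_of_pos (by positivity)
    have habs : ‖f' m s‖ = lam ^ m * ((α * m) * s ^ (α * m - 1)) / Real.Gamma (α * m + 1) := by
      rw [Real.norm_eq_abs, abs_div, abs_of_pos hΓ0, abs_mul, abs_pow, abs_neg,
        abs_of_pos hlam, abs_of_nonneg (by positivity)]
    rw [habs]; simp only [hu]; rw [mul_div_assoc']
    rw [div_le_div_iff₀ hΓ0 hΓ0]
    have key : s ^ (α * m - 1) ≤ (2*t) ^ (α * m) * (2/t) := by
      have h1 : s ^ (α * m - 1) = s ^ (α * m) / s := by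
        rw [Real.rpow_sub hs0, Real.rpow_one]
      rw [h1]
      have h2 : s ^ (α * m) ≤ (2*t) ^ (α * m) :=
        Real.rpow_le_rpow hs0.le hs.2.le (by positivity)
      have h3 : (1:ℝ)/s ≤ 2/t := by
        rw [div_le_div_iff₀ hs0 ht]
        nlinarith [hs.1]
      calc s ^ (α * m) / s = s ^ (α * m) * (1/s) := by ring
        _ ≤ (2*t) ^ (α*m) * (2/t) := by
            apply mul_le_mul h2 h3 (by positivity) (by positivity)
    have hpow : (2*t) ^ (α * (m:ℝ)) = ((2*t) ^ α) ^ m := by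
      rw [Real.rpow_mul (by positivity), Real.rpow_natCast]
    have hRm : lam ^ m * ((2*t) ^ α) ^ m = R ^ m := by rw [hR, mul_pow]
    have hαm : (α * m) * (2/t) ≤ (2*α/t) * ((m:ℝ)+1) := by
      have e1 : α * (m:ℝ) * (2 / t) = 2 * α * (m:ℝ) / t := by ring
      have e2 : (2 * α / t) * ((m:ℝ) + 1) = 2 * α * ((m:ℝ) + 1) / t := by ring
      rw [e1, e2]
      gcongr
      linarith
    calc lam ^ m * (α * m * s ^ (α * m - 1)) * Real.Gamma (α * m + 1)
        ≤ lam ^ m * (α * m * ((2*t) ^ (α * m) * (2/t))) * Real.Gamma (α * m + 1) := by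
          have : α * (m:ℝ) * s ^ (α * m - 1) ≤ α * m * ((2*t) ^ (α * m) * (2/t)) := by
            apply mul_le_mul_of_nonneg_left key (by positivity)
          apply mul_le_mul_of_nonneg_right _ hΓ0.le
          apply mul_le_mul_of_nonneg_left this (by positivity)
      _ ≤ 2 * α / t * (((m:ℝ) + 1) * R ^ m) * Real.Gamma (α * m + 1) := by
          apply mul_le_mul_of_nonneg_right _ hΓ0.le
          rw [hpow]
          calc lam ^ m * (α * m * (((2*t)^α) ^ m * (2/t)))
              = (α * m * (2/t)) * (lam ^ m * ((2*t)^α) ^ m) := by ring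
            _ ≤ ((2*α/t) * ((m:ℝ)+1)) * (lam ^ m * ((2*t)^α) ^ m) := by
                apply mul_le_mul_of_nonneg_right hαm (by positivity)
            _ = 2 * α / t * (((m:ℝ) + 1) * R ^ m) := by rw [hRm]; ring
  -- summability at t
  have hft_sum : Summable (fun m => f m t) := by
    apply Summable.of_norm_bounded (ml_summable α (lam * t ^ α) hα0 (by positivity))
    intro m
    have hΓ0 : 0 < Real.Gamma (α * m + 1) := Real.Gamma_pos_of_pos (by positivity)
    rw [hf, Real.norm_eq_abs, abs_div, abs_of_pos hΓ0, abs_mul, abs_pow, abs_neg,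
      abs_of_pos hlam, abs_of_nonneg (Real.rpow_nonneg ht.le _)]
    have : lam ^ m * t ^ (α * (m:ℝ)) = (lam * t ^ α) ^ m := by
      rw [mul_pow, Real.rpow_mul ht.le, Real.rpow_natCast]
    rw [this]
    have hle : (lam * t ^ α) ^ m ≤ ((m:ℝ)+1) * (lam * t ^ α) ^ m := by
      nlinarith [pow_nonneg (mul_nonneg hlam.le (Real.rpow_nonneg ht.le α)) m,
        Nat.cast_nonneg (α := ℝ) m]
    rw [div_le_div_iff₀ hΓ0 hΓ0]
    nlinarith [hΓ0.le]
  -- main derivative of the series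
  have hmain : HasDerivAt (fun z => ∑' m, f m z) (∑' m, f' m t) t :=
    hasDerivAt_tsum_of_isPreconnected hu_sum isOpen_Ioo (convex_Ioo _ _).isPreconnected
      hderiv hbound htT hft_sum htT
  -- the original function agrees with the series near t
  have hEq : (fun s : ℝ => mittagLeffler α 1 (-(lam * s ^ α))) =ᶠ[nhds t]
      (fun z => ∑' m, f m z) := by
    filter_upwards [isOpen_Ioo.mem_nhds htT] with s hs
    have hs0 : (0:ℝ) < s := lt_trans ht2 hs.1
    unfold mittagLeffler
    refine tsum_congr fun m => ?_
    rw [hf]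
    congr 1
    rw [show -(lam * s ^ α) = (-lam) * s ^ α by ring, mul_pow,
      ← Real.rpow_natCast (s ^ α) m, ← Real.rpow_mul hs0.le]
  have hfin : HasDerivAt (fun s : ℝ => mittagLeffler α 1 (-(lam * s ^ α)))
      (∑' m, f' m t) t := hmain.congr_of_eventuallyEq hEq
  -- identify the derivative value
  have hsum' : Summable (fun m => f' m t) :=
    Summable.of_norm_bounded hu_sum (fun m => hbound m t htT)
  have hval : (∑' m, f' m t) = -(lam * t ^ (α - 1) * mittagLeffler α α (-(lam * t ^ α))) := by
    rw [Summable.tsum_eq_zero_add hsum']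
    have h0 : f' 0 t = 0 := by simp [hf']
    rw [h0, zero_add]
    have hterm : ∀ k : ℕ, f' (k+1) t
        = (-(lam * t ^ (α-1))) * ((-(lam * t ^ α)) ^ k / Real.Gamma (α * k + α)) := by
      intro k
      have hc0 : α * ((k:ℝ)+1) ≠ 0 := by positivity
      have hΓpos : 0 < Real.Gamma (α * k + α) := Real.Gamma_pos_of_pos (by positivity)
      have hcast : (((k+1 : ℕ)):ℝ) = (k:ℝ) + 1 := by push_cast; ring
      have hΓ : Real.Gamma (α * ((k+1:ℕ):ℝ) + 1)
          = (α * ((k:ℝ)+1)) * Real.Gamma (α * k + α) := by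
        rw [hcast, Real.Gamma_add_one (by positivity)]
        congr 2
        ring
      simp only [hf']
      rw [hΓ]
      have hrp : t ^ (α * (((k+1:ℕ)):ℝ) - 1) = t ^ (α - 1) * t ^ (α * (k:ℝ)) := by
        rw [← Real.rpow_add ht, hcast]
        congr 1
        ring
      have hx : (-(lam * t ^ α)) ^ k = (-lam) ^ k * t ^ (α * (k:ℝ)) := by
        rw [show -(lam * t ^ α) = (-lam) * t ^ α by ring, mul_pow,
          ← Real.rpow_natCast (t ^ α) k, ← Real.rpow_mul ht.le]
      rw [hrp, hx, hcast, pow_succ]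
      field_simp
    calc (∑' k, f' (k+1) t)
        = ∑' k : ℕ, (-(lam * t ^ (α-1))) * ((-(lam * t ^ α)) ^ k / Real.Gamma (α * k + α)) :=
          tsum_congr hterm
      _ = (-(lam * t ^ (α-1))) * ∑' k : ℕ, (-(lam * t ^ α)) ^ k / Real.Gamma (α * k + α) :=
          tsum_mul_left
      _ = -(lam * t ^ (α - 1) * mittagLeffler α α (-(lam * t ^ α))) := by
          rw [mittagLeffler]; ring
  rwa [hval] at hfin
end

section
/- Let 0 < α < 1 be a real constant. Then E_{α,1}(-η) > 0 for every η ≥ 0. -/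
open Real MeasureTheory intervalIntegral Set Filter

namespace ML

/-- log Γ is ≥ 0 for x ≥ 2, i.e. Γ(x) ≥ 1. -/
lemma one_le_Gamma {x : ℝ} (hx : 2 ≤ x) : 1 ≤ Real.Gamma x := by
  rcases eq_or_lt_of_le hx with h | h
  · rw [← h]; rw [(by norm_num : (2:ℝ) = 1 + 1), Real.Gamma_add_one one_ne_zero, Real.Gamma_one]
    norm_num
  · have hc := Real.convexOn_log_Gamma
    have h1 : (1:ℝ) ∈ Set.Ioi (0:ℝ) := by norm_num
    have hx0 : x ∈ Set.Ioi (0:ℝ) := by simp; linarith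
    -- 2 = θ•1 + (1-θ)•x with θ = (x-2)/(x-1)
    have hx1 : (1:ℝ) < x := by linarith
    set θ : ℝ := (x - 2) / (x - 1) with hθ
    have hθ0 : 0 ≤ θ := div_nonneg (by linarith) (by linarith)
    have hθ1 : 0 ≤ 1 - θ := by
      rw [sub_nonneg, hθ, div_le_one (by linarith)]; linarith
    have hsum : θ + (1 - θ) = 1 := by ring
    have hcomb : θ • (1:ℝ) + (1 - θ) • x = 2 := by
      have hne : x - 1 ≠ 0 := by intro h'; rw [sub_eq_zero] at h'; linarith
      rw [smul_eq_mul, smul_eq_mul, hθ]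
      field_simp; ring
    have := hc.2 h1 hx0 hθ0 hθ1 hsum
    rw [hcomb] at this
    simp only [Function.comp_apply, smul_eq_mul, Real.Gamma_one, Real.log_one, mul_zero,
      zero_add] at this
    have hlog2 : Real.log (Real.Gamma 2) = 0 := by
      rw [(by norm_num : (2:ℝ) = 1 + 1), Real.Gamma_add_one one_ne_zero, Real.Gamma_one]
      simp
    rw [hlog2] at this
    have hθ1' : 0 < 1 - θ := by
      rw [sub_pos, hθ, div_lt_one (by linarith)]; linarith
    have hlogx : 0 ≤ Real.log (Real.Gamma x) := nonneg_of_mul_nonneg_right (by linarith) hθ1'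
    have := Real.exp_le_exp.mpr hlogx
    rwa [Real.exp_zero, Real.exp_log (Real.Gamma_pos_of_pos (by linarith))] at this


variable {α : ℝ}

/-- Log-convexity interpolation: `Γ(x+1) ≤ Γ(x+α) * (x+α)^(1-α)` for `x > 0`, `0 < α < 1`. -/
lemma Gamma_interp (hα0 : 0 < α) (hα1 : α < 1) {x : ℝ} (hx : 0 < x) :
    Real.Gamma (x + 1) ≤ Real.Gamma (x + α) * (x + α) ^ (1 - α) := by
  have hc := Real.convexOn_log_Gamma
  have ha : x + α ∈ Set.Ioi (0:ℝ) := by simp; linarith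
  have hb : x + α + 1 ∈ Set.Ioi (0:ℝ) := by simp; linarith
  have hθ1 : (0:ℝ) ≤ 1 - α := by linarith
  have hsum : α + (1 - α) = 1 := by ring
  have hcomb : α • (x + α) + (1 - α) • (x + α + 1) = x + 1 := by
    rw [smul_eq_mul, smul_eq_mul]; ring
  have h := hc.2 ha hb hα0.le hθ1 hsum
  rw [hcomb] at h
  simp only [Function.comp_apply, smul_eq_mul] at h
  have hpa : 0 < x + α := by linarith
  have hGa : 0 < Real.Gamma (x + α) := Real.Gamma_pos_of_pos hpa
  have hrec : Real.Gamma (x + α + 1) = (x + α) * Real.Gamma (x + α) :=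
    Real.Gamma_add_one hpa.ne'
  rw [hrec, Real.log_mul hpa.ne' hGa.ne'] at h
  have h2 : Real.log (Real.Gamma (x + 1)) ≤
      Real.log (Real.Gamma (x + α)) + (1 - α) * Real.log (x + α) := by nlinarith
  have h5 := Real.exp_le_exp.mpr h2
  rw [Real.exp_log (Real.Gamma_pos_of_pos (by linarith)), Real.exp_add,
    Real.exp_log hGa] at h5
  rw [Real.rpow_def_of_pos hpa, mul_comm (Real.log (x+α))]
  exact h5

/-- Key growth bound: `Γ(x) * x^α / 2 ≤ Γ(x+α)` for `x ≥ 1`. -/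
lemma Gamma_growth (hα0 : 0 < α) (hα1 : α < 1) {x : ℝ} (hx : 1 ≤ x) :
    Real.Gamma x * (x ^ α / 2) ≤ Real.Gamma (x + α) := by
  have hx0 : (0:ℝ) < x := by linarith
  have h1 := Gamma_interp hα0 hα1 hx0
  rw [Real.Gamma_add_one hx0.ne'] at h1
  have h3 : (x + α) ^ (1 - α) ≤ 2 * x ^ (1 - α) := by
    have : (x + α) ^ (1-α) ≤ (2*x) ^ (1-α) :=
      Real.rpow_le_rpow (by linarith) (by linarith) (by linarith)
    apply this.trans
    rw [Real.mul_rpow (by norm_num) hx0.le]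
    have : (2:ℝ) ^ (1-α) ≤ 2 ^ (1:ℝ) :=
      Real.rpow_le_rpow_of_exponent_le (by norm_num) (by linarith)
    rw [Real.rpow_one] at this
    have hxpow : (0:ℝ) ≤ x ^ (1-α) := (Real.rpow_pos_of_pos hx0 _).le
    nlinarith
  have hGa : 0 < Real.Gamma (x + α) := Real.Gamma_pos_of_pos (by linarith)
  have h4 : x * Real.Gamma x ≤ Real.Gamma (x + α) * (2 * x ^ (1 - α)) := by
    calc x * Real.Gamma x ≤ Real.Gamma (x + α) * (x + α) ^ (1-α) := h1
    _ ≤ Real.Gamma (x + α) * (2 * x ^ (1-α)) := by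
        exact mul_le_mul_of_nonneg_left h3 hGa.le
  have hxsplit : x ^ α * x ^ (1 - α) = x := by
    rw [← Real.rpow_add hx0]; norm_num
  have hxpow : (0:ℝ) < x ^ (1-α) := Real.rpow_pos_of_pos hx0 _
  have e1 : Real.Gamma x * (x ^ α / 2) * x ^ (1-α) = x * Real.Gamma x / 2 := by
    calc Real.Gamma x * (x ^ α / 2) * x ^ (1-α)
        = (x ^ α * x ^ (1-α)) * Real.Gamma x / 2 := by ring
      _ = x * Real.Gamma x / 2 := by rw [hxsplit]
  apply le_of_mul_le_mul_right _ hxpow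
  rw [e1]
  linarith [h4]

lemma summable_aux (hα0 : 0 < α) (hα1 : α < 1) {R β : ℝ} (hR : 0 ≤ R) (hβ : 1 ≤ β) :
    Summable (fun m : ℕ => R ^ m / Real.Gamma (α * m + β)) := by
  have hx1 : ∀ m : ℕ, (1:ℝ) ≤ α * m + β := fun m =>
    le_add_of_nonneg_of_le (by positivity) hβ
  have hx0 : ∀ m : ℕ, (0:ℝ) < α * m + β := fun m => lt_of_lt_of_le one_pos (hx1 m)
  have hG : ∀ m : ℕ, 0 < Real.Gamma (α * m + β) := fun m => Real.Gamma_pos_of_pos (hx0 m)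
  have hGa : ∀ m : ℕ, 0 < Real.Gamma (α * m + β + α) := fun m =>
    Real.Gamma_pos_of_pos (by have := hx0 m; linarith)
  -- tendsto
  have htend : Tendsto (fun m : ℕ => (α * m + β) ^ α) atTop atTop := by
    apply (tendsto_rpow_atTop hα0).comp
    apply tendsto_atTop_add_const_right
    exact (tendsto_natCast_atTop_atTop (R := ℝ)).const_mul_atTop hα0
  -- eventual ratio bound
  apply summable_of_ratio_norm_eventually_le (r := 1/2) (by norm_num)
  filter_upwards [htend.eventually_ge_atTop (4 * R + 4)] with m hm
  have harg : α * ((m : ℕ) + 1 : ℕ) + β = (α * m + β) + α := by push_cast; ring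
  set x := α * m + β with hxdef
  have hg := Gamma_growth hα0 hα1 (hx1 m)
  have hG2 : Real.Gamma x * (2 * R + 2) ≤ Real.Gamma (x + α) := by
    calc Real.Gamma x * (2 * R + 2) ≤ Real.Gamma x * (x ^ α / 2) := by
          apply mul_le_mul_of_nonneg_left _ (hG m).le
          linarith [hm]
      _ ≤ Real.Gamma (x + α) := hg
  rw [Real.norm_eq_abs, Real.norm_eq_abs, abs_of_nonneg (by positivity),
    abs_of_nonneg (by positivity), harg]
  rw [div_le_iff₀ (by exact hGa m), pow_succ]
  have h6 : R ^ m / Real.Gamma x * Real.Gamma (x+α) ≥ R ^ m / Real.Gamma x * (Real.Gamma x * (2*R+2)) := by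
    apply mul_le_mul_of_nonneg_left hG2 (by positivity)
  have h7 : R ^ m / Real.Gamma x * (Real.Gamma x * (2*R+2)) = R ^ m * (2*R+2) := by
    rw [← mul_assoc, div_mul_cancel₀ _ ((hG m).ne' : Real.Gamma x ≠ 0)]
  nlinarith [h6, h7, pow_nonneg hR m, (hG m).le]

/-- The function `u t = E_α(-t^α)` as a series in `t`. -/
noncomputable def u (α : ℝ) (t : ℝ) : ℝ := ∑' m : ℕ, (-1)^m * t^(α*m) / Real.Gamma (α*m+1)

lemma u_term_bound (hα0 : 0 < α) {A : ℝ} (hA : 0 ≤ A) (m : ℕ) {t : ℝ} (ht : |t| ≤ A) :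
    |t^(α*m)| ≤ (A^α)^m := by
  calc |t^(α*(m:ℕ))| ≤ |t|^(α*(m:ℕ)) := Real.abs_rpow_le_abs_rpow t _
    _ ≤ A^(α*(m:ℕ)) := Real.rpow_le_rpow (abs_nonneg t) ht (by positivity)
    _ = (A^α)^(m:ℕ) := by rw [Real.rpow_mul hA, Real.rpow_natCast]

lemma Gamma_arg_pos (hα0 : 0 < α) (m : ℕ) : (0:ℝ) < Real.Gamma (α*m+1) :=
  Real.Gamma_pos_of_pos (by positivity)

lemma term_norm_bound (hα0 : 0 < α) {A : ℝ} (hA : 0 ≤ A) (m : ℕ) {t : ℝ} (ht : |t| ≤ A) :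
    ‖(-1)^m * t^(α*m) / Real.Gamma (α*m+1)‖ ≤ (A^α)^m / Real.Gamma (α*m+1) := by
  have hG := Gamma_arg_pos hα0 m
  rw [Real.norm_eq_abs, abs_div, abs_of_pos hG, abs_mul, abs_pow, abs_neg, abs_one, one_pow,
    one_mul]
  gcongr
  exact u_term_bound hα0 hA m ht

lemma summable_majorant (hα0 : 0 < α) (hα1 : α < 1) {A : ℝ} (hA : 0 ≤ A) :
    Summable (fun m : ℕ => (A^α)^m / Real.Gamma (α*m+1)) :=
  summable_aux hα0 hα1 (Real.rpow_nonneg hA α) le_rfl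

lemma u_summable (hα0 : 0 < α) (hα1 : α < 1) (t : ℝ) :
    Summable (fun m : ℕ => (-1)^m * t^(α*m) / Real.Gamma (α*m+1)) := by
  apply Summable.of_norm_bounded (summable_majorant hα0 hα1 (abs_nonneg t))
  exact fun m => term_norm_bound hα0 (abs_nonneg t) m le_rfl

lemma u_continuous (hα0 : 0 < α) (hα1 : α < 1) : Continuous (u α) := by
  rw [continuous_iff_continuousAt]
  intro x
  set A : ℝ := |x| + 1 with hA
  have hA0 : (0:ℝ) ≤ A := by positivity
  have hmem : Icc (-A) A ∈ nhds x := by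
    apply Icc_mem_nhds
    · have := abs_nonneg x; have := neg_abs_le x; linarith
    · have := le_abs_self x; linarith
  apply ContinuousOn.continuousAt _ hmem
  have hterm : ∀ m : ℕ, Continuous (fun t : ℝ => (-1)^m * t^(α*m) / Real.Gamma (α*m+1)) := by
    intro m
    exact (continuous_const.mul (Real.continuous_rpow_const (by positivity))).div_const _
  apply TendstoUniformlyOn.continuousOn
    (tendstoUniformlyOn_tsum (summable_majorant hα0 hα1 hA0)
      (fun m t ht' => term_norm_bound hα0 hA0 m (abs_le.mpr ⟨by linarith [ht'.1], ht'.2⟩)))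
  exact Filter.Eventually.frequently <| Filter.Eventually.of_forall fun n =>
    (continuous_finset_sum _ fun m _ => hterm m).continuousOn

lemma u_zero (hα0 : 0 < α) : u α 0 = 1 := by
  rw [u]
  rw [tsum_eq_single 0]
  · norm_num
  · intro m hm
    have hm' : (0:ℝ) < α*(m:ℕ) :=
      mul_pos hα0 (by exact_mod_cast Nat.pos_of_ne_zero hm)
    rw [Real.zero_rpow hm'.ne']
    simp

/-- Real scaled Beta integral. -/
lemma beta_real {p q t : ℝ} (hp : 0 < p) (hq : 0 < q) (ht : 0 < t) :
    ∫ s in (0:ℝ)..t, (t-s)^(p-1) * s^(q-1) =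
      Real.Gamma p * Real.Gamma q / Real.Gamma (p+q) * t^(p+q-1) := by
  have hGpq : (0:ℝ) < Real.Gamma (p+q) := Real.Gamma_pos_of_pos (by linarith)
  -- complex computation
  have hscaled := Complex.betaIntegral_scaled (q : ℂ) (p : ℂ) ht
  have hgamma := Complex.Gamma_mul_Gamma_eq_betaIntegral
    (by simpa using hq : 0 < (q:ℂ).re) (by simpa using hp : 0 < (p:ℂ).re)
  -- write the complex integral as the coercion of the real one
  have hcongr : ∫ x in (0:ℝ)..t, (x:ℂ) ^ ((q:ℂ) - 1) * ((t:ℂ) - (x:ℂ)) ^ ((p:ℂ) - 1) =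
      ((∫ s in (0:ℝ)..t, (t-s)^(p-1) * s^(q-1) : ℝ) : ℂ) := by
    rw [← intervalIntegral.integral_ofReal]
    apply intervalIntegral.integral_congr
    intro x hx
    beta_reduce
    rw [uIcc_of_le ht.le] at hx
    have hx0 : (0:ℝ) ≤ x := hx.1
    have hxt : (0:ℝ) ≤ t - x := by linarith [hx.2]
    have e1 : ((q:ℂ) - 1) = ((q - 1 : ℝ) : ℂ) := by push_cast; ring
    have e2 : ((p:ℂ) - 1) = ((p - 1 : ℝ) : ℂ) := by push_cast; ring
    have e3 : ((t:ℂ) - (x:ℂ)) = ((t - x : ℝ) : ℂ) := by push_cast; ring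
    rw [e1, e2, e3, ← Complex.ofReal_cpow hx0, ← Complex.ofReal_cpow hxt,
      ← Complex.ofReal_mul]
    norm_cast
    ring
  rw [hcongr] at hscaled
  -- identify the beta factor
  have hGne : Complex.Gamma ((q:ℂ) + (p:ℂ)) ≠ 0 := by
    have : ((q:ℂ) + (p:ℂ)) = ((q + p : ℝ) : ℂ) := by push_cast; ring
    rw [this, Complex.Gamma_ofReal]
    exact_mod_cast (Real.Gamma_pos_of_pos (by linarith : (0:ℝ) < q + p)).ne'
  have hbeta : Complex.betaIntegral (q:ℂ) (p:ℂ) =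
      Complex.Gamma (q:ℂ) * Complex.Gamma (p:ℂ) / Complex.Gamma ((q:ℂ) + (p:ℂ)) := by
    rw [eq_div_iff hGne]
    linear_combination -hgamma
  rw [hbeta] at hscaled
  have hpow : ((t:ℂ)) ^ ((q:ℂ) + (p:ℂ) - 1) = ((t ^ (p+q-1) : ℝ) : ℂ) := by
    have e : ((q:ℂ) + (p:ℂ) - 1) = ((p + q - 1 : ℝ) : ℂ) := by push_cast; ring
    rw [e, Complex.ofReal_cpow ht.le]
  rw [hpow, Complex.Gamma_ofReal, Complex.Gamma_ofReal] at hscaled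
  have e4 : ((q:ℂ) + (p:ℂ)) = ((q + p : ℝ) : ℂ) := by push_cast; ring
  rw [e4, Complex.Gamma_ofReal] at hscaled
  have : ((∫ s in (0:ℝ)..t, (t-s)^(p-1) * s^(q-1) : ℝ) : ℂ) =
      ((t ^ (p+q-1) * (Real.Gamma q * Real.Gamma p / Real.Gamma (q+p)) : ℝ) : ℂ) := by
    rw [hscaled]; push_cast; ring
  have := Complex.ofReal_inj.mp this
  rw [this]
  rw [add_comm q p]
  ring

lemma kernel_intervalIntegrable (hα1 : 0 < α) (w a b : ℝ) :
    IntervalIntegrable (fun s => (w - s)^(α-1)) volume a b := by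
  have h := (intervalIntegral.intervalIntegrable_rpow'
    (by linarith : (-1:ℝ) < α - 1) (a := w - a) (b := w - b)).comp_sub_left w
  simpa using h

lemma kernel_mul_intervalIntegrable (hα1 : 0 < α) {g : ℝ → ℝ} (hg : Continuous g)
    (w a b : ℝ) : IntervalIntegrable (fun s => (w - s)^(α-1) * g s) volume a b :=
  (kernel_intervalIntegrable hα1 w a b).mul_continuousOn hg.continuousOn

lemma beta_m (hα0 : 0 < α) {t : ℝ} (ht : 0 < t) (m : ℕ) :
    ∫ s in (0:ℝ)..t, (t-s)^(α-1) * s^(α*m) =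
      Real.Gamma α * Real.Gamma (α*m+1) / Real.Gamma (α*m+α+1) * t^(α*m+α) := by
  have h := beta_real (p := α) (q := α*m+1) hα0 (by positivity) ht
  have e1 : α*(m:ℝ)+1-1 = α*m := by ring
  have e2 : α+(α*(m:ℝ)+1) = α*m+α+1 := by ring
  have e3 : α+(α*(m:ℝ)+1)-1 = α*m+α := by ring
  rw [e1, e2] at h
  have e4 : α*(m:ℝ)+α+1-1 = α*m+α := by ring
  rw [e4] at h
  exact h

lemma integral_eq (hα0 : 0 < α) (hα1 : α < 1) {t : ℝ} (ht : 0 < t) :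
    ∫ s in (0:ℝ)..t, (t-s)^(α-1) * u α s = Real.Gamma α * (1 - u α t) := by
  have hβ1 : (1:ℝ) ≤ α + 1 := by linarith
  set μ := volume.restrict (Ioc (0:ℝ) t) with hμ
  set g : ℕ → ℝ → ℝ :=
    fun m s => (t-s)^(α-1) * ((-1)^m * s^(α*m) / Real.Gamma (α*m+1)) with hgdef
  have hgm_cont : ∀ m : ℕ, Continuous (fun s : ℝ => (-1)^m * s^(α*m) / Real.Gamma (α*m+1)) :=
    fun m => (continuous_const.mul (Real.continuous_rpow_const (by positivity))).div_const _
  have hII : ∀ m, IntervalIntegrable (g m) volume 0 t :=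
    fun m => kernel_mul_intervalIntegrable hα0 (hgm_cont m) t 0 t
  have hIOn : ∀ m, IntegrableOn (g m) (Ioc (0:ℝ) t) volume :=
    fun m => (intervalIntegrable_iff_integrableOn_Ioc_of_le ht.le).mp (hII m)
  have hmeas : ∀ m, AEStronglyMeasurable (g m) μ := fun m => (hIOn m).aestronglyMeasurable
  -- the common value
  set c : ℕ → ℝ := fun m => Real.Gamma α * t^(α*(m+1:ℕ)) / Real.Gamma (α*(m+1:ℕ)+1) with hcdef
  have hc_nonneg : ∀ m, 0 ≤ c m := by
    intro m
    have h1 : (0:ℝ) < Real.Gamma α := Real.Gamma_pos_of_pos hα0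
    have h2 : (0:ℝ) < Real.Gamma (α*(m+1:ℕ)+1) := Real.Gamma_pos_of_pos (by positivity)
    have h3 : (0:ℝ) < t^(α*(m+1:ℕ)) := Real.rpow_pos_of_pos ht _
    positivity
  have hgval : ∀ m, ∫ s in (0:ℝ)..t, g m s = (-1)^m * c m := by
    intro m
    have h1 : ∫ s in (0:ℝ)..t, g m s
        = ((-1)^m / Real.Gamma (α*m+1)) * ∫ s in (0:ℝ)..t, (t-s)^(α-1) * s^(α*m) := by
      rw [← intervalIntegral.integral_const_mul]
      apply intervalIntegral.integral_congr
      intro x _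
      beta_reduce
      rw [hgdef]
      ring
    rw [h1, beta_m hα0 ht m]
    simp only [hcdef]
    have hG1 : Real.Gamma (α*m+1) ≠ 0 := (Gamma_arg_pos hα0 m).ne'
    have e1 : α*((m:ℕ)+1:ℕ) = α*m+α := by push_cast; ring
    rw [e1]
    field_simp
  have habs : ∀ m, ∫ s in Ioc (0:ℝ) t, |g m s| = c m := by
    intro m
    have : ∀ s ∈ Ioc (0:ℝ) t, |g m s| =
        (t-s)^(α-1) * (s^(α*m) / Real.Gamma (α*m+1)) := by
      intro s hs
      have h1 : (0:ℝ) ≤ (t-s)^(α-1) := Real.rpow_nonneg (by linarith [hs.2]) _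
      have h2 : (0:ℝ) ≤ s^(α*m) := Real.rpow_nonneg hs.1.le _
      have h3 : (0:ℝ) < Real.Gamma (α*m+1) := Gamma_arg_pos hα0 m
      rw [hgdef]
      beta_reduce
      rw [abs_mul, abs_of_nonneg h1, abs_div, abs_mul, abs_pow, abs_neg, abs_one, one_pow,
        one_mul, abs_of_nonneg h2, abs_of_pos h3]
    rw [MeasureTheory.setIntegral_congr_fun measurableSet_Ioc this,
      ← intervalIntegral.integral_of_le ht.le]
    have h1 : ∫ s in (0:ℝ)..t, (t-s)^(α-1) * (s^(α*m) / Real.Gamma (α*m+1))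
        = (Real.Gamma (α*m+1))⁻¹ * ∫ s in (0:ℝ)..t, (t-s)^(α-1) * s^(α*m) := by
      rw [← intervalIntegral.integral_const_mul]
      apply intervalIntegral.integral_congr
      intro x _; beta_reduce; ring
    rw [h1, beta_m hα0 ht m]
    simp only [hcdef]
    have hG1 : Real.Gamma (α*m+1) ≠ 0 := (Gamma_arg_pos hα0 m).ne'
    have e1 : α*((m:ℕ)+1:ℕ) = α*m+α := by push_cast; ring
    rw [e1]
    field_simp
  have hc_summable : Summable c := by
    have h0 : (0:ℝ) ≤ t^α := Real.rpow_nonneg ht.le α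
    have hs := (summable_aux hα0 hα1 h0 hβ1).mul_left (Real.Gamma α * t^α)
    apply hs.congr
    intro m
    have e1 : α*((m:ℕ)+1:ℕ) = α*m+α := by push_cast; ring
    simp only [hcdef]
    rw [e1]
    have e2 : α*(m:ℝ)+α+1 = α*m+(α+1) := by ring
    rw [e2, Real.rpow_add ht, ← Real.rpow_natCast (t^α) m, ← Real.rpow_mul ht.le]
    rw [mul_comm α (m:ℝ)]
    ring
  -- apply integral_tsum
  have hlint : ∑' m, ∫⁻ s, ‖g m s‖₊ ∂μ ≠ ⊤ := by
    have heach : ∀ m, ∫⁻ s, ‖g m s‖₊ ∂μ = ENNReal.ofReal (c m) := by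
      intro m
      have habs_int : Integrable (fun s => |g m s|) μ := (hIOn m).abs
      have h1 : ENNReal.ofReal (∫ s, |g m s| ∂μ) = ∫⁻ s, ENNReal.ofReal (|g m s|) ∂μ :=
        MeasureTheory.ofReal_integral_eq_lintegral_ofReal habs_int
          (Filter.Eventually.of_forall fun s => abs_nonneg _)
      have h2 : ∀ s, ENNReal.ofReal (|g m s|) = (‖g m s‖₊ : ENNReal) := by
        intro s; rw [← Real.norm_eq_abs, ofReal_norm, enorm_eq_nnnorm]
      simp_rw [h2] at h1
      rw [← h1]
      congr 1
      exact habs m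
    rw [tsum_congr heach, ← ENNReal.ofReal_tsum_of_nonneg hc_nonneg hc_summable]
    exact ENNReal.ofReal_ne_top
  have hswap := MeasureTheory.integral_tsum hmeas hlint
  have hptwise : ∀ s : ℝ, (t-s)^(α-1) * u α s = ∑' m, g m s := by
    intro s
    rw [u]
    exact (tsum_mul_left).symm
  -- the sum identity
  set S : ℝ := ∑' m : ℕ, (-1)^m * (t^(α*((m:ℕ)+1:ℕ)) / Real.Gamma (α*((m:ℕ)+1:ℕ)+1)) with hSdef
  have hu_eq : u α t = 1 - S := by
    rw [u, Summable.tsum_eq_zero_add (u_summable hα0 hα1 t)]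
    have h0 : ((-1:ℝ))^(0:ℕ) * t^(α*((0:ℕ):ℝ))/Real.Gamma (α*((0:ℕ):ℝ)+1) = 1 := by
      norm_num [Real.Gamma_one]
    rw [h0]
    have hcongr : ∀ m : ℕ, (-1)^(m+1) * t^(α*((m+1:ℕ):ℝ))/Real.Gamma (α*((m+1:ℕ):ℝ)+1)
        = -((-1)^m * (t^(α*((m:ℕ)+1:ℕ)) / Real.Gamma (α*((m:ℕ)+1:ℕ)+1))) := by
      intro m
      push_cast
      ring
    rw [tsum_congr hcongr, tsum_neg, hSdef]
    ring
  have hfinal : ∑' m : ℕ, (-1)^m * c m = Real.Gamma α * S := by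
    have : ∀ m : ℕ, (-1:ℝ)^m * c m
        = Real.Gamma α * ((-1)^m * (t^(α*((m:ℕ)+1:ℕ)) / Real.Gamma (α*((m:ℕ)+1:ℕ)+1))) := by
      intro m
      simp only [hcdef]
      ring
    rw [tsum_congr this, tsum_mul_left, hSdef]
  calc ∫ s in (0:ℝ)..t, (t-s)^(α-1) * u α s
      = ∫ s, (∑' m, g m s) ∂μ := by
        rw [intervalIntegral.integral_of_le ht.le]
        simp_rw [hptwise]
        rfl
    _ = ∑' m, ∫ s, g m s ∂μ := hswap
    _ = ∑' m : ℕ, (-1)^m * c m := by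
        refine tsum_congr fun m => ?_
        rw [← hgval m, intervalIntegral.integral_of_le ht.le]
    _ = Real.Gamma α * (1 - u α t) := by rw [hfinal, hu_eq]; ring

lemma heq' (hα0 : 0 < α) (hα1 : α < 1) {t : ℝ} (ht : 0 ≤ t) :
    ∫ s in (0:ℝ)..t, (t-s)^(α-1) * u α s = Real.Gamma α * (1 - u α t) := by
  rcases eq_or_lt_of_le ht with h | h
  · rw [← h]
    simp [u_zero hα0]
  · exact integral_eq hα0 hα1 h

lemma u_pos (hα0 : 0 < α) (hα1 : α < 1) : ∀ t : ℝ, 0 ≤ t → 0 < u α t := by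
  by_contra hcon
  push_neg at hcon
  obtain ⟨T, hT0, hTle⟩ := hcon
  have hcont := u_continuous hα0 hα1
  have hu0 := u_zero (α := α) hα0
  have hΓ : (0:ℝ) < Real.Gamma α := Real.Gamma_pos_of_pos hα0
  set Z : Set ℝ := {t | 0 ≤ t ∧ u α t = 0} with hZ
  have hZne : Z.Nonempty := by
    have h0T : (0:ℝ) ∈ Icc (u α T) (u α 0) := by
      rw [hu0]; exact ⟨hTle, by norm_num⟩
    obtain ⟨z, hz, hz0⟩ := intermediate_value_Icc' hT0 hcont.continuousOn h0T
    exact ⟨z, hz.1, hz0⟩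
  have hZclosed : IsClosed Z := by
    have : Z = Ici (0:ℝ) ∩ (u α)⁻¹' {0} := by
      ext x
      constructor
      · exact fun hx => ⟨hx.1, hx.2⟩
      · exact fun hx => ⟨hx.1, hx.2⟩
    rw [this]
    exact isClosed_Ici.inter (isClosed_singleton.preimage hcont)
  have hbdd : BddBelow Z := ⟨0, fun z hz => hz.1⟩
  set t₀ : ℝ := sInf Z with ht₀def
  have ht₀mem : t₀ ∈ Z := hZclosed.csInf_mem hZne hbdd
  have ht₀z : u α t₀ = 0 := ht₀mem.2
  have ht₀0 : 0 < t₀ := by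
    rcases eq_or_lt_of_le ht₀mem.1 with h | h
    · exfalso; rw [← h, hu0] at ht₀z; norm_num at ht₀z
    · exact h
  have hpos : ∀ s, 0 ≤ s → s < t₀ → 0 < u α s := by
    intro s hs0 hst
    rcases lt_trichotomy (u α s) 0 with h | h | h
    · exfalso
      have h0s : (0:ℝ) ∈ Icc (u α s) (u α 0) := ⟨h.le, by rw [hu0]; norm_num⟩
      obtain ⟨z, hz, hz0⟩ := intermediate_value_Icc' hs0 hcont.continuousOn h0s
      have : t₀ ≤ z := csInf_le hbdd ⟨hz.1, hz0⟩
      linarith [hz.2]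
    · exact absurd (csInf_le hbdd ⟨hs0, h⟩) (by linarith)
    · exact h
  -- choose δ
  set D : ℝ := α * Real.Gamma α / 2 with hDdef
  have hD0 : 0 < D := by positivity
  set δ : ℝ := min t₀ (D ^ (α⁻¹)) with hδdef
  have hδ0 : 0 < δ := lt_min ht₀0 (Real.rpow_pos_of_pos hD0 _)
  have hδt₀ : δ ≤ t₀ := min_le_left _ _
  have hδD : δ ^ α ≤ D := by
    have h1 : δ ^ α ≤ (D ^ (α⁻¹)) ^ α :=
      Real.rpow_le_rpow hδ0.le (min_le_right _ _) hα0.le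
    rwa [← Real.rpow_mul hD0.le, inv_mul_cancel₀ hα0.ne', Real.rpow_one] at h1
  set t₁ : ℝ := t₀ - δ with ht₁def
  have ht₁0 : 0 ≤ t₁ := by simp [ht₁def]; linarith [hδt₀]
  have ht₁t₀ : t₁ ≤ t₀ := by simp [ht₁def]; linarith [hδ0]
  -- maximum on [t₁, t₀]
  obtain ⟨τ, hτmem, hτmax⟩ := isCompact_Icc.exists_isMaxOn (nonempty_Icc.mpr ht₁t₀)
    hcont.continuousOn
  set M : ℝ := u α τ with hMdef
  have hM0 : 0 < M := by
    rcases eq_or_lt_of_le (hτmem.2 : τ ≤ t₀) with h | h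
    · -- τ = t₀ : then M = 0, but M ≥ u t₁ ... t₁ < t₀ so u t₁ > 0 ≤ M
      have h1 := hτmax ⟨le_refl t₁, ht₁t₀⟩
      have h2 : 0 < u α t₁ := hpos t₁ ht₁0 (by linarith [hδ0])
      simp only [hMdef]
      calc (0:ℝ) < u α t₁ := h2
        _ ≤ u α τ := h1
    · exact hpos τ (le_trans ht₁0 hτmem.1) h
  -- key estimate at τ
  have hτ0 : 0 ≤ τ := le_trans ht₁0 hτmem.1
  have h1 := heq' hα0 hα1 hτ0
  have h2 := heq' hα0 hα1 ht₀0.le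
  rw [ht₀z] at h2
  -- integrability
  have hi1 : IntervalIntegrable (fun s => (t₀-s)^(α-1) * u α s) volume 0 τ :=
    kernel_mul_intervalIntegrable hα0 hcont t₀ 0 τ
  have hi2 : IntervalIntegrable (fun s => (t₀-s)^(α-1) * u α s) volume τ t₀ :=
    kernel_mul_intervalIntegrable hα0 hcont t₀ τ t₀
  have hi3 : IntervalIntegrable (fun s => (τ-s)^(α-1) * u α s) volume 0 τ :=
    kernel_mul_intervalIntegrable hα0 hcont τ 0 τ
  have hsplit : ∫ s in (0:ℝ)..t₀, (t₀-s)^(α-1) * u α s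
      = (∫ s in (0:ℝ)..τ, (t₀-s)^(α-1) * u α s) + ∫ s in τ..t₀, (t₀-s)^(α-1) * u α s :=
    (intervalIntegral.integral_add_adjacent_intervals hi1 hi2).symm
  -- first comparison
  have hcmp : ∫ s in (0:ℝ)..τ, (t₀-s)^(α-1) * u α s ≤ ∫ s in (0:ℝ)..τ, (τ-s)^(α-1) * u α s := by
    apply intervalIntegral.integral_mono_ae_restrict hτ0 hi1 hi3
    have hne : ∀ᵐ s ∂(volume.restrict (Icc (0:ℝ) τ)), s ≠ τ := by
      apply MeasureTheory.ae_restrict_of_ae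
      rw [MeasureTheory.ae_iff]
      have : {s : ℝ | ¬ s ≠ τ} = {τ} := by ext x; simp
      rw [this]
      exact measure_singleton τ
    filter_upwards [hne, MeasureTheory.ae_restrict_mem measurableSet_Icc] with s hsne hsmem
    have hs0 : 0 ≤ s := hsmem.1
    have hsτ : s < τ := lt_of_le_of_ne hsmem.2 hsne
    have hu_nonneg : 0 ≤ u α s := (hpos s hs0 (lt_of_lt_of_le hsτ hτmem.2)).le
    apply mul_le_mul_of_nonneg_right _ hu_nonneg
    exact Real.rpow_le_rpow_of_nonpos (by linarith) (by linarith [hτmem.2]) (by linarith)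
  -- second bound
  have hker_int : IntervalIntegrable (fun s => (t₀-s)^(α-1) * M) volume τ t₀ :=
    (kernel_intervalIntegrable hα0 t₀ τ t₀).mul_const M
  have hbnd : ∫ s in τ..t₀, (t₀-s)^(α-1) * u α s ≤ ∫ s in τ..t₀, (t₀-s)^(α-1) * M := by
    apply intervalIntegral.integral_mono_on hτmem.2 hi2 hker_int
    intro s hs
    have hK : (0:ℝ) ≤ (t₀-s)^(α-1) := Real.rpow_nonneg (by linarith [hs.2]) _
    apply mul_le_mul_of_nonneg_left _ hK
    exact hτmax ⟨le_trans hτmem.1 hs.1, hs.2⟩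
  have hker_val : ∫ s in τ..t₀, (t₀-s)^(α-1) = (t₀-τ)^α / α := by
    rw [intervalIntegral.integral_comp_sub_left (fun v => v^(α-1)) t₀, sub_self]
    rw [integral_rpow (Or.inl (by linarith : (-1:ℝ) < α - 1))]
    have e : α - 1 + 1 = α := by ring
    rw [e, Real.zero_rpow hα0.ne']
    ring
  have hbnd2 : ∫ s in τ..t₀, (t₀-s)^(α-1) * M ≤ Real.Gamma α * M / 2 := by
    rw [intervalIntegral.integral_mul_const, hker_val]
    have h3 : (t₀-τ)^α ≤ δ^α := by
      apply Real.rpow_le_rpow (by linarith [hτmem.2]) _ hα0.le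
      simp only [ht₁def] at hτmem
      linarith [hτmem.1]
    have h4 : (t₀-τ)^α ≤ D := le_trans h3 hδD
    rw [hDdef] at h4
    calc (t₀-τ)^α / α * M ≤ (α * Real.Gamma α / 2) / α * M := by
          apply mul_le_mul_of_nonneg_right _ hM0.le
          gcongr
      _ = Real.Gamma α * M / 2 := by field_simp
  -- combine
  have hfinal : Real.Gamma α * u α τ ≤ Real.Gamma α * M / 2 := by
    have e1 : Real.Gamma α * u α τ
        = (∫ s in (0:ℝ)..t₀, (t₀-s)^(α-1) * u α s) - ∫ s in (0:ℝ)..τ, (τ-s)^(α-1) * u α s := by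
      rw [h1, h2]; ring
    rw [e1, hsplit]
    linarith [hcmp, hbnd, hbnd2]
  have : u α τ ≤ M / 2 := by
    have := (mul_le_mul_iff_right₀ hΓ).mp (by linarith [hfinal] : Real.Gamma α * u α τ ≤ Real.Gamma α * (M/2))
    exact this
  rw [← hMdef] at this
  linarith

end ML

/-- For `0 < α < 1`, `E_{α,1}(-η) > 0` for all `η ≥ 0`. -/
theorem stmt_3 (α : ℝ) (hα0 : 0 < α) (hα1 : α < 1) :
    ∀ η : ℝ, 0 ≤ η → 0 < mittagLeffler α 1 (-η) := by
  intro η hη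
  rcases eq_or_lt_of_le hη with h | h
  · rw [← h, neg_zero]
    have h1 : mittagLeffler α 1 0 = 1 := by
      rw [mittagLeffler, tsum_eq_single 0]
      · norm_num [Real.Gamma_one]
      · intro m hm
        rw [zero_pow hm, zero_div]
    rw [h1]; norm_num
  · have hkey := ML.u_pos hα0 hα1 (η ^ (α⁻¹)) (Real.rpow_nonneg h.le _)
    have h2 : mittagLeffler α 1 (-η) = ML.u α (η ^ (α⁻¹)) := by
      rw [mittagLeffler, ML.u]
      apply tsum_congr
      intro m
      have e : (η ^ (α⁻¹)) ^ (α*(m:ℝ)) = η ^ (m:ℕ) := by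
        rw [← Real.rpow_mul hη,
          show α⁻¹ * (α*(m:ℝ)) = (m:ℝ) by field_simp]
        exact Real.rpow_natCast η m
      rw [e, neg_pow]
    rw [h2]
    exact hkey
end
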